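/- For every even natural number n ≥ 4, there exist n/2 Hamiltonian cycles in the complete graph K_n whose edge sets together cover every edge of K_n. -/

import Mathlib

/-! We construct, for even `n ≥ 4`, the `n/2` rotations of a "zigzag" Hamiltonian cycle
`t, t+1, t-1, t+2, t-2, …` on `Fin n`; together they cover all edges of `K_n`. -/

/-- position `j` of the zigzag cycle with offset `t`, as a natural number `< n`. -/
def zpos (n t j : ℕ) : ℕ :=
  if Even j then (t + n - j / 2) % n else (t + j / 2 + 1) % n

lemma zpos_lt (n t j : ℕ) (hn : 0 < n) : zpos n t j < n := by
  unfold zpos; split <;> exact Nat.mod_lt _ hn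

lemma mod_eq_cancel {n x y : ℕ} (h : x % n = y % n) (hxy : x ≤ y) (hy : y < x + n) : x = y := by
  have h1 : n ∣ y - x := (Nat.modEq_iff_dvd' hxy).mp h
  rcases Nat.lt_or_ge (y - x) 1 with h2 | h2
  · omega
  · have := Nat.le_of_dvd (by omega) h1; omega

lemma mod_eq_cancel' {n x y : ℕ} (h : x % n = y % n) (h1 : x < y + n) (h2 : y < x + n) : x = y := by
  rcases le_total x y with h3 | h3
  · exact mod_eq_cancel h h3 h2
  · exact (mod_eq_cancel h.symm h3 h1).symm

lemma zpos_inj {n t a b : ℕ} (hn : 4 ≤ n) (he : n % 2 = 0) (ht : t < n)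
    (ha : a < n) (hb : b < n) (h : zpos n t a = zpos n t b) : a = b := by
  unfold zpos at h
  by_cases h1 : Even a <;> by_cases h2 : Even b <;>
    simp only [h1, h2, if_true, if_false, if_pos, if_neg, not_false_iff] at h <;>
    rw [Nat.even_iff] at * <;>
    first
      | (have := mod_eq_cancel' h (by omega) (by omega); omega)
      | (simp at h1 h2; rw [Nat.odd_iff] at *;
         have := mod_eq_cancel' h (by omega) (by omega); omega)

/-- position `j` of the zigzag cycle with offset `t`, as an element of `Fin n`. -/
def zposF (n t j : ℕ) (hn : 0 < n) : Fin n := ⟨zpos n t j, zpos_lt n t j hn⟩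

lemma zposF_inj {n t a b : ℕ} (hn : 4 ≤ n) (he : n % 2 = 0) (ht : t < n)
    (ha : a < n) (hb : b < n) (h : zposF n t a (by omega) = zposF n t b (by omega)) : a = b :=
  zpos_inj hn he ht ha hb (congrArg Fin.val h)

/-- the zigzag walk from position `j` back around to position `0`. -/
def zigWalk (n t : ℕ) (hn : 4 ≤ n) (he : n % 2 = 0) (ht : t < n) :
    (j : ℕ) → (hj : 0 < j) → (hj' : j < n) →
      SimpleGraph.Walk (⊤ : SimpleGraph (Fin n)) (zposF n t j (by omega)) (zposF n t 0 (by omega))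
  | j, hj, hj' =>
    if h : j + 1 < n then
      SimpleGraph.Walk.cons
        (by simp only [SimpleGraph.top_adj]
            intro hc; exact absurd (zposF_inj hn he ht hj' h hc) (by omega))
        (zigWalk n t hn he ht (j+1) (by omega) h)
    else
      SimpleGraph.Walk.cons
        (by simp only [SimpleGraph.top_adj]
            intro hc; exact absurd (zposF_inj hn he ht hj' (by omega) hc) (by omega))
        SimpleGraph.Walk.nil
  termination_by j _ _ => n - j

/-- the full zigzag cycle starting at `zposF n t 0`. -/
def zigCycle (n t : ℕ) (hn : 4 ≤ n) (he : n % 2 = 0) (ht : t < n) :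
    SimpleGraph.Walk (⊤ : SimpleGraph (Fin n)) (zposF n t 0 (by omega)) (zposF n t 0 (by omega)) :=
  SimpleGraph.Walk.cons
    (by simp only [SimpleGraph.top_adj]
        intro hc; exact absurd (zposF_inj hn he ht (by omega) (by omega) hc) (by omega))
    (zigWalk n t hn he ht 1 (by omega) (by omega))

lemma zigWalk_support (n t : ℕ) (hn : 4 ≤ n) (he : n % 2 = 0) (ht : t < n)
    (j : ℕ) (hj : 0 < j) (hj' : j < n) :
    (zigWalk n t hn he ht j hj hj').support
      = (List.range' j (n - j)).map (fun m => zposF n t m (by omega)) ++ [zposF n t 0 (by omega)] := by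
  rw [zigWalk]
  split
  · rename_i h
    rw [SimpleGraph.Walk.support_cons, zigWalk_support n t hn he ht (j+1) (by omega) h]
    have hr : n - j = (n - (j+1)) + 1 := by omega
    rw [hr, List.range'_succ]
    simp
  · rename_i h
    have hj2 : n - j = 1 := by omega
    rw [hj2]
    simp [SimpleGraph.Walk.support_cons]
  termination_by n - j

lemma zigWalk_edges (n t : ℕ) (hn : 4 ≤ n) (he : n % 2 = 0) (ht : t < n)
    (j : ℕ) (hj : 0 < j) (hj' : j < n) :
    (zigWalk n t hn he ht j hj hj').edges
      = (List.range' j (n - 1 - j)).map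
          (fun m => s(zposF n t m (by omega), zposF n t (m+1) (by omega)))
        ++ [s(zposF n t (n-1) (by omega), zposF n t 0 (by omega))] := by
  rw [zigWalk]
  split
  · rename_i h
    rw [SimpleGraph.Walk.edges_cons, zigWalk_edges n t hn he ht (j+1) (by omega) h]
    have hr : n - 1 - j = (n - 1 - (j+1)) + 1 := by omega
    rw [hr, List.range'_succ]
    simp
  · rename_i h
    have hj2 : j = n - 1 := by omega
    subst hj2
    have : n - 1 - (n-1) = 0 := by omega
    rw [this]
    simp [SimpleGraph.Walk.edges_cons]
  termination_by n - j

lemma zigCycle_support_tail (n t : ℕ) (hn : 4 ≤ n) (he : n % 2 = 0) (ht : t < n) :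
    (zigCycle n t hn he ht).support.tail
      = (List.range' 1 (n - 1)).map (fun m => zposF n t m (by omega)) ++ [zposF n t 0 (by omega)] := by
  rw [zigCycle, SimpleGraph.Walk.support_cons, List.tail_cons,
    zigWalk_support n t hn he ht 1 (by omega) (by omega)]

lemma zigCycle_edges (n t : ℕ) (hn : 4 ≤ n) (he : n % 2 = 0) (ht : t < n) :
    (zigCycle n t hn he ht).edges
      = (List.range' 0 (n - 1)).map
          (fun m => s(zposF n t m (by omega), zposF n t (m+1) (by omega)))
        ++ [s(zposF n t (n-1) (by omega), zposF n t 0 (by omega))] := by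
  rw [zigCycle, SimpleGraph.Walk.edges_cons,
    zigWalk_edges n t hn he ht 1 (by omega) (by omega)]
  have hr : n - 1 = (n - 1 - 1) + 1 := by omega
  rw [hr, List.range'_succ]
  norm_num

lemma zigCycle_mem_edges (n t : ℕ) (hn : 4 ≤ n) (he : n % 2 = 0) (ht : t < n)
    (m : ℕ) (hm : m + 1 < n) :
    s(zposF n t m (by omega), zposF n t (m+1) (by omega)) ∈ (zigCycle n t hn he ht).edges := by
  rw [zigCycle_edges]
  apply List.mem_append_left
  apply List.mem_map_of_mem
  simp [List.mem_range']
  omega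


lemma zpos_even (n t k : ℕ) : zpos n t (2*k) = (t + n - k) % n := by
  unfold zpos
  rw [if_pos ⟨k, by omega⟩]
  congr 2
  omega

lemma zpos_odd (n t k : ℕ) : zpos n t (2*k+1) = (t + k + 1) % n := by
  unfold zpos
  rw [if_neg (by rw [Nat.even_iff]; omega)]
  congr 2
  omega

lemma mod_of_or {n x y : ℕ} (hy : y < n) (h : x = y ∨ x = y + n) : x % n = y := by
  rcases h with h | h <;> subst h
  · exact Nat.mod_eq_of_lt hy
  · rw [Nat.add_mod_right]; exact Nat.mod_eq_of_lt hy

lemma zig_cover (n : ℕ) (hn : 4 ≤ n) (he : n % 2 = 0) (a b : ℕ) (ha : a < n) (hb : b < n)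
    (hab : a ≠ b) :
    ∃ t m, t < n/2 ∧ m + 1 < n ∧
      ((zpos n t m = a ∧ zpos n t (m+1) = b) ∨ (zpos n t m = b ∧ zpos n t (m+1) = a)) := by
  rcases Nat.even_or_odd (a + b) with hpar | hpar
  · -- even sum: use the edge between positions 2k-1 and 2k
    rw [Nat.even_iff] at hpar
    obtain ⟨t, ht1, ht2⟩ : ∃ t, t < n/2 ∧ (2*t = a+b ∨ 2*t + n = a+b) :=
      ⟨if (a+b)/2 < n/2 then (a+b)/2 else (a+b)/2 - n/2, by split <;> omega⟩
    obtain ⟨k1, hk11, hk12⟩ : ∃ k, k < n ∧ (k + a = t ∨ k + a = t + n) :=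
      ⟨if a ≤ t then t - a else t + n - a, by split <;> omega⟩
    obtain ⟨k2, hk21, hk22⟩ : ∃ k, k < n ∧ (k + b = t ∨ k + b = t + n) :=
      ⟨if b ≤ t then t - b else t + n - b, by split <;> omega⟩
    have hor : (1 ≤ k1 ∧ k1 < n/2) ∨ (1 ≤ k2 ∧ k2 < n/2) := by omega
    rcases hor with ⟨hk1, hk2⟩ | ⟨hk1, hk2⟩
    · refine ⟨t, 2*k1 - 1, ht1, by omega, ?_⟩
      have hm : 2*k1 - 1 + 1 = 2*k1 := by omega
      have hm2 : 2*k1 - 1 = 2*(k1-1) + 1 := by omega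
      rw [hm, hm2, zpos_odd, zpos_even]
      refine Or.inr ⟨mod_of_or hb (by omega), mod_of_or ha (by omega)⟩
    · refine ⟨t, 2*k2 - 1, ht1, by omega, ?_⟩
      have hm : 2*k2 - 1 + 1 = 2*k2 := by omega
      have hm2 : 2*k2 - 1 = 2*(k2-1) + 1 := by omega
      rw [hm, hm2, zpos_odd, zpos_even]
      refine Or.inl ⟨mod_of_or ha (by omega), mod_of_or hb (by omega)⟩
  · -- odd sum: use the edge between positions 2k and 2k+1
    rw [Nat.odd_iff] at hpar
    obtain ⟨t, ht1, ht2⟩ : ∃ t, t < n/2 ∧ (2*t + 1 = a+b ∨ 2*t + 1 + n = a+b) :=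
      ⟨if (a+b-1)/2 < n/2 then (a+b-1)/2 else (a+b-1)/2 - n/2, by split <;> omega⟩
    obtain ⟨k1, hk11, hk12⟩ : ∃ k, k < n ∧ (k + a = t ∨ k + a = t + n) :=
      ⟨if a ≤ t then t - a else t + n - a, by split <;> omega⟩
    obtain ⟨k2, hk21, hk22⟩ : ∃ k, k < n ∧ (k + b = t ∨ k + b = t + n) :=
      ⟨if b ≤ t then t - b else t + n - b, by split <;> omega⟩
    have hor : k1 < n/2 ∨ k2 < n/2 := by omega
    rcases hor with hk1 | hk2
    · refine ⟨t, 2*k1, ht1, by omega, ?_⟩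
      rw [zpos_even, zpos_odd]
      refine Or.inl ⟨mod_of_or ha (by omega), mod_of_or hb (by omega)⟩
    · refine ⟨t, 2*k2, ht1, by omega, ?_⟩
      rw [zpos_even, zpos_odd]
      refine Or.inr ⟨mod_of_or hb (by omega), mod_of_or ha (by omega)⟩

lemma zigCycle_isHamiltonianCycle (n t : ℕ) (hn : 4 ≤ n) (he : n % 2 = 0) (ht : t < n) :
    (zigCycle n t hn he ht).IsHamiltonianCycle := by
  have h0 : 0 < n := by omega
  rw [SimpleGraph.Walk.isHamiltonianCycle_iff_isCycle_and_support_count_tail_eq_one]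
  have htail : (zigCycle n t hn he ht).support.tail
      = (List.range' 1 (n-1) ++ [0]).map (fun m => zposF n t m h0) := by
    rw [zigCycle_support_tail, List.map_append]
    rfl
  have hLnd : (List.range' 1 (n-1) ++ [0]).Nodup := by
    rw [List.nodup_append]
    refine ⟨List.nodup_range', List.nodup_singleton _, ?_⟩
    intro x hx y hx0 hxy
    simp only [List.mem_range'_1] at hx
    simp only [List.mem_singleton] at hx0
    omega
  have hLlt : ∀ x ∈ List.range' 1 (n-1) ++ [0], x < n := by
    intro x hx
    rcases List.mem_append.mp hx with hx | hx
    · simp only [List.mem_range'_1] at hx; omega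
    · simp only [List.mem_singleton] at hx; omega
  have hnd : ((List.range' 1 (n-1) ++ [0]).map (fun m => zposF n t m h0)).Nodup :=
    List.Nodup.map_on
      (fun x hx y hy hxy => zposF_inj hn he ht (hLlt x hx) (hLlt y hy) hxy) hLnd
  have hmem : ∀ x : Fin n, x ∈ (List.range' 1 (n-1) ++ [0]).map (fun m => zposF n t m h0) := by
    have hlen : ((List.range' 1 (n-1) ++ [0]).map (fun m => zposF n t m h0)).length = n := by
      simp; omega
    have hcard : ((List.range' 1 (n-1) ++ [0]).map (fun m => zposF n t m h0)).toFinset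
        = Finset.univ := by
      apply Finset.eq_univ_of_card
      rw [List.toFinset_card_of_nodup hnd, hlen, Fintype.card_fin]
    intro x
    rw [← List.mem_toFinset, hcard]
    exact Finset.mem_univ x
  refine ⟨?_, ?_⟩
  · rw [SimpleGraph.Walk.isCycle_def]
    refine ⟨?_, ?_, ?_⟩
    · rw [SimpleGraph.Walk.isTrail_def, zigCycle_edges, List.nodup_append]
      refine ⟨?_, List.nodup_singleton _, ?_⟩
      · apply List.Nodup.map_on ?_ (List.nodup_range')
        intro x hx y hy hxy
        simp only [List.mem_range'_1] at hx hy
        rcases Sym2.eq_iff.mp hxy with ⟨h1, h2⟩ | ⟨h1, h2⟩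
        · exact zposF_inj hn he ht (by omega) (by omega) h1
        · have e1 := zposF_inj hn he ht (by omega) (by omega) h1
          have e2 := zposF_inj hn he ht (by omega) (by omega) h2
          omega
      · intro x hx y hy hx0
        simp only [List.mem_map, List.mem_range'_1] at hx
        obtain ⟨m, hm, rfl⟩ := hx
        simp only [List.mem_singleton] at hy; subst hy
        rcases Sym2.eq_iff.mp hx0 with ⟨h1, h2⟩ | ⟨h1, h2⟩
        · have e1 := zposF_inj hn he ht (by omega) (by omega) h1
          omega
        · have e1 := zposF_inj hn he ht (by omega) (by omega) h1
          have e2 := zposF_inj hn he ht (by omega) (by omega) h2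
          omega
    · intro hcon
      have hlen := congrArg SimpleGraph.Walk.length hcon
      rw [zigCycle] at hlen
      simp at hlen
    · rw [htail]
      exact hnd
  · intro x
    rw [htail]
    exact List.count_eq_one_of_mem hnd (hmem x)

theorem hamiltonian_covering_of_even (n : ℕ) (hn : 4 ≤ n) (heven : Even n) :
    ∃ (v : Fin (n / 2) → Fin n)
      (w : (i : Fin (n / 2)) → (⊤ : SimpleGraph (Fin n)).Walk (v i) (v i)),
      (∀ i, (w i).IsHamiltonianCycle) ∧
      (∀ e ∈ (⊤ : SimpleGraph (Fin n)).edgeSet, ∃ i, e ∈ (w i).edges) := by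
  have he : n % 2 = 0 := Nat.even_iff.mp heven
  have h0 : 0 < n := by omega
  refine ⟨fun i => zposF n i.val 0 h0,
    fun i => zigCycle n i.val hn he (by have := i.isLt; omega), fun i => ?_, ?_⟩
  · exact zigCycle_isHamiltonianCycle n i.val hn he (by have := i.isLt; omega)
  · intro e hee
    induction e using Sym2.ind with
    | _ u v =>
      have huv : u ≠ v := by simpa using hee
      obtain ⟨t, m, ht2, hm, hc⟩ :=
        zig_cover n hn he u.val v.val u.isLt v.isLt (fun h => huv (Fin.ext h))
      refine ⟨⟨t, ht2⟩, ?_⟩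
      have hmem := zigCycle_mem_edges n t hn he (by omega) m hm
      rcases hc with ⟨h1, h2⟩ | ⟨h1, h2⟩
      · have e1 : zposF n t m h0 = u := Fin.ext h1
        have e2 : zposF n t (m+1) h0 = v := Fin.ext h2
        rw [e1, e2] at hmem
        exact hmem
      · have e1 : zposF n t m h0 = v := Fin.ext h1
        have e2 : zposF n t (m+1) h0 = u := Fin.ext h2
        rw [e1, e2] at hmem
        rwa [Sym2.eq_swap] at hmem
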